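/- For p = 4, the function ζ = log((x1²+x2²)²+16x3²) satisfies Δ₄ ζ = X1(‖∇₀ζ‖² X1ζ) + X2(‖∇₀ζ‖² X2ζ) = 0 on ℝ³ \ {0}. -/

import Mathlib

noncomputable section

abbrev P3 : Type := ℝ × ℝ × ℝ

/-- Heisenberg vector field X1 = ∂/∂x1 - (x2/2) ∂/∂x3 (real-valued functions). -/
def X1r (u : P3 → ℝ) (p : P3) : ℝ :=
  fderiv ℝ u p (1, 0, 0) - p.2.1 / 2 * fderiv ℝ u p (0, 0, 1)

/-- Heisenberg vector field X2 = ∂/∂x2 + (x1/2) ∂/∂x3 (real-valued functions). -/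
def X2r (u : P3 → ℝ) (p : P3) : ℝ :=
  fderiv ℝ u p (0, 1, 0) + p.1 / 2 * fderiv ℝ u p (0, 0, 1)

def zeta4 (q : P3) : ℝ := Real.log ((q.1 ^ 2 + q.2.1 ^ 2) ^ 2 + 16 * q.2.2 ^ 2)

namespace HeisAux

lemma sq' {f : P3 → ℝ} {f' : P3 →L[ℝ] ℝ} {x : P3} (h : HasFDerivAt f f' x) :
    HasFDerivAt (fun y => f y ^ 2) ((2 * f x) • f') x := by
  simp only [pow_two]
  have e : (2 * f x) • f' = f x • f' + f x • f' := by rw [two_mul, add_smul]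
  rw [e]
  exact h.mul h

lemma cube' {f : P3 → ℝ} {f' : P3 →L[ℝ] ℝ} {x : P3} (h : HasFDerivAt f f' x) :
    HasFDerivAt (fun y => f y ^ 3) ((3 * f x ^ 2) • f') x := by
  have e1 : (fun y => f y ^ 3) = fun y => f y ^ 2 * f y := by
    funext y; rw [pow_succ]
  have e2 : (3 * f x ^ 2) • f' = (f x ^ 2) • f' + f x • (2 * f x) • f' := by
    rw [smul_smul, ← add_smul]; congr 1; ring
  rw [e1, e2]
  exact (sq' h).mul h

def rhoF (p : P3) : ℝ := (p.1 ^ 2 + p.2.1 ^ 2) ^ 2 + 16 * p.2.2 ^ 2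
def AF (p : P3) : ℝ := 4 * p.1 * (p.1 ^ 2 + p.2.1 ^ 2) - 16 * p.2.1 * p.2.2
def BF (p : P3) : ℝ := 4 * p.2.1 * (p.1 ^ 2 + p.2.1 ^ 2) + 16 * p.1 * p.2.2

lemma inv' {f : P3 → ℝ} {f' : P3 →L[ℝ] ℝ} {x : P3} (h : HasFDerivAt f f' x)
    (h0 : f x ≠ 0) :
    HasFDerivAt (fun y => (f y)⁻¹) ((-(f x ^ 2)⁻¹) • f') x := by
  exact (hasDerivAt_inv h0).comp_hasFDerivAt x h

lemma rhoF_ne {p : P3} (hp : p ≠ 0) : rhoF p ≠ 0 := by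
  intro h
  apply hp
  simp only [rhoF] at h
  have h4 : (p.1 ^ 2 + p.2.1 ^ 2) ^ 2 = 0 := by nlinarith [sq_nonneg (p.1 ^ 2 + p.2.1 ^ 2), sq_nonneg p.2.2]
  have h5 : p.1 ^ 2 + p.2.1 ^ 2 = 0 := by
    exact pow_eq_zero_iff (two_ne_zero) |>.mp h4
  have hx1 : p.1 ^ 2 = 0 := by nlinarith [sq_nonneg p.1, sq_nonneg p.2.1]
  have hy1 : p.2.1 ^ 2 = 0 := by nlinarith [sq_nonneg p.1, sq_nonneg p.2.1]
  have hz1 : p.2.2 ^ 2 = 0 := by nlinarith [sq_nonneg p.2.2]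
  have hx0 := pow_eq_zero_iff (two_ne_zero) |>.mp hx1
  have hy0 := pow_eq_zero_iff (two_ne_zero) |>.mp hy1
  have hz0 := pow_eq_zero_iff (two_ne_zero) |>.mp hz1
  have : p = (p.1, p.2.1, p.2.2) := rfl
  rw [this, hx0, hy0, hz0]
  rfl

section derivs
variable (p : P3)

def hx : HasFDerivAt (fun p : P3 => p.1) (ContinuousLinearMap.fst ℝ ℝ (ℝ × ℝ)) p :=
  hasFDerivAt_fst

def hy : HasFDerivAt (fun p : P3 => p.2.1)
    ((ContinuousLinearMap.fst ℝ ℝ ℝ).comp (ContinuousLinearMap.snd ℝ ℝ (ℝ × ℝ))) p :=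
  (hasFDerivAt_fst (𝕜 := ℝ)).comp p (hasFDerivAt_snd (𝕜 := ℝ))

def hz : HasFDerivAt (fun p : P3 => p.2.2)
    ((ContinuousLinearMap.snd ℝ ℝ ℝ).comp (ContinuousLinearMap.snd ℝ ℝ (ℝ × ℝ))) p :=
  (hasFDerivAt_snd (𝕜 := ℝ)).comp p (hasFDerivAt_snd (𝕜 := ℝ))

end derivs

lemma X1_zeta (p : P3) (hp : rhoF p ≠ 0) : X1r zeta4 p = AF p / rhoF p := by
  have hp' : (p.1 ^ 2 + p.2.1 ^ 2) ^ 2 + 16 * p.2.2 ^ 2 ≠ 0 := hp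
  have hr2 := (sq' (hx p)).add (sq' (hy p))
  have hrho := (sq' hr2).add ((sq' (hz p)).const_mul 16)
  have hzeta : HasFDerivAt zeta4 _ p := hrho.log hp'
  have hf := hzeta.fderiv
  rw [X1r, hf]
  simp only [ContinuousLinearMap.smul_apply, ContinuousLinearMap.add_apply,
    ContinuousLinearMap.coe_comp', Function.comp_apply,
    ContinuousLinearMap.coe_fst', ContinuousLinearMap.coe_snd', smul_eq_mul]
  simp only [AF, rhoF, Pi.add_apply, Pi.mul_apply]
  field_simp
  ring

lemma X2_zeta (p : P3) (hp : rhoF p ≠ 0) : X2r zeta4 p = BF p / rhoF p := by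
  have hp' : (p.1 ^ 2 + p.2.1 ^ 2) ^ 2 + 16 * p.2.2 ^ 2 ≠ 0 := hp
  have hr2 := (sq' (hx p)).add (sq' (hy p))
  have hrho := (sq' hr2).add ((sq' (hz p)).const_mul 16)
  have hzeta : HasFDerivAt zeta4 _ p := hrho.log hp'
  have hf := hzeta.fderiv
  rw [X2r, hf]
  simp only [ContinuousLinearMap.smul_apply, ContinuousLinearMap.add_apply,
    ContinuousLinearMap.coe_comp', Function.comp_apply,
    ContinuousLinearMap.coe_fst', ContinuousLinearMap.coe_snd', smul_eq_mul]
  simp only [BF, rhoF, Pi.add_apply, Pi.mul_apply]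
  field_simp
  ring

lemma cont_rho : Continuous rhoF := by unfold rhoF; fun_prop

end HeisAux

set_option maxHeartbeats 4000000 in
open HeisAux in
theorem heisenberg_4_harmonic (q : P3) (hq : q ≠ 0) :
    X1r (fun r => ((X1r zeta4 r) ^ 2 + (X2r zeta4 r) ^ 2) * X1r zeta4 r) q +
      X2r (fun r => ((X1r zeta4 r) ^ 2 + (X2r zeta4 r) ^ 2) * X2r zeta4 r) q = 0 := by
  have hρ : rhoF q ≠ 0 := rhoF_ne hq
  have hρ' : (q.1 ^ 2 + q.2.1 ^ 2) ^ 2 + 16 * q.2.2 ^ 2 ≠ 0 := hρ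
  have hU : IsOpen {p : P3 | rhoF p ≠ 0} := isOpen_compl_singleton.preimage cont_rho
  have hnhds : {p : P3 | rhoF p ≠ 0} ∈ nhds q := hU.mem_nhds hρ
  have heq1 : (fun r => ((X1r zeta4 r) ^ 2 + (X2r zeta4 r) ^ 2) * X1r zeta4 r)
      =ᶠ[nhds q] (fun p => ((4 * p.1 * (p.1 ^ 2 + p.2.1 ^ 2) - 16 * p.2.1 * p.2.2) ^ 2 +
          (4 * p.2.1 * (p.1 ^ 2 + p.2.1 ^ 2) + 16 * p.1 * p.2.2) ^ 2) *
          (4 * p.1 * (p.1 ^ 2 + p.2.1 ^ 2) - 16 * p.2.1 * p.2.2) *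
          (((p.1 ^ 2 + p.2.1 ^ 2) ^ 2 + 16 * p.2.2 ^ 2) ^ 3)⁻¹) := by
    filter_upwards [hnhds] with p hp
    have hp' : (p.1 ^ 2 + p.2.1 ^ 2) ^ 2 + 16 * p.2.2 ^ 2 ≠ 0 := hp
    rw [X1_zeta p hp, X2_zeta p hp]
    simp only [AF, BF, rhoF]
    field_simp
  have heq2 : (fun r => ((X1r zeta4 r) ^ 2 + (X2r zeta4 r) ^ 2) * X2r zeta4 r)
      =ᶠ[nhds q] (fun p => ((4 * p.1 * (p.1 ^ 2 + p.2.1 ^ 2) - 16 * p.2.1 * p.2.2) ^ 2 +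
          (4 * p.2.1 * (p.1 ^ 2 + p.2.1 ^ 2) + 16 * p.1 * p.2.2) ^ 2) *
          (4 * p.2.1 * (p.1 ^ 2 + p.2.1 ^ 2) + 16 * p.1 * p.2.2) *
          (((p.1 ^ 2 + p.2.1 ^ 2) ^ 2 + 16 * p.2.2 ^ 2) ^ 3)⁻¹) := by
    filter_upwards [hnhds] with p hp
    have hp' : (p.1 ^ 2 + p.2.1 ^ 2) ^ 2 + 16 * p.2.2 ^ 2 ≠ 0 := hp
    rw [X1_zeta p hp, X2_zeta p hp]
    simp only [AF, BF, rhoF]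
    field_simp
  have hr2 := (sq' (hx q)).add (sq' (hy q))
  have hrho := (sq' hr2).add ((sq' (hz q)).const_mul 16)
  have hA := (((hx q).const_mul 4).mul hr2).sub (((hy q).const_mul 16).mul (hz q))
  have hB := (((hy q).const_mul 4).mul hr2).add (((hx q).const_mul 16).mul (hz q))
  have hN1 := ((sq' hA).add (sq' hB)).mul hA
  have hN2 := ((sq' hA).add (sq' hB)).mul hB
  have hrho3 := cube' hrho
  have hinv := inv' hrho3 (pow_ne_zero 3 hρ')
  have hG1 := hN1.mul hinv
  have hG2 := hN2.mul hinv
  simp only [Pi.add_def, Pi.mul_def, Pi.sub_def] at hG1 hG2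
  rw [X1r, X2r, heq1.fderiv_eq, heq2.fderiv_eq, hG1.fderiv, hG2.fderiv]
  simp only [ContinuousLinearMap.smul_apply, ContinuousLinearMap.add_apply,
    ContinuousLinearMap.sub_apply, ContinuousLinearMap.coe_comp', Function.comp_apply,
    ContinuousLinearMap.coe_fst', ContinuousLinearMap.coe_snd', smul_eq_mul]
  simp only [← inv_pow]
  have hv : ((q.1 ^ 2 + q.2.1 ^ 2) ^ 2 + 16 * q.2.2 ^ 2) * ((q.1 ^ 2 + q.2.1 ^ 2) ^ 2 + 16 * q.2.2 ^ 2)⁻¹ = 1 := mul_inv_cancel₀ hρ'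
  linear_combination (-(768 * (q.1 ^ 2 + q.2.1 ^ 2) ^ 2 * ((q.1 ^ 2 + q.2.1 ^ 2) ^ 2 + 16 * q.2.2 ^ 2)) * (((q.1 ^ 2 + q.2.1 ^ 2) ^ 2 + 16 * q.2.2 ^ 2)⁻¹) ^ 3 * ((((q.1 ^ 2 + q.2.1 ^ 2) ^ 2 + 16 * q.2.2 ^ 2)⁻¹) ^ 2 * ((q.1 ^ 2 + q.2.1 ^ 2) ^ 2 + 16 * q.2.2 ^ 2) ^ 2 + (((q.1 ^ 2 + q.2.1 ^ 2) ^ 2 + 16 * q.2.2 ^ 2)⁻¹) * ((q.1 ^ 2 + q.2.1 ^ 2) ^ 2 + 16 * q.2.2 ^ 2) + 1)) * hv
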